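/- arXiv:1305.0848 — 2 statements merged into one kernel-verified Lean document; each statement's English description precedes it below -/
import Mathlib

section
/- Let P_{ABE} be an unambiguous tripartite distribution. Then the advantage A(P_{ABE}) := I(A;B) − I(A;E) equals H(B) − H(E), where all quantities are Shannon (conditional) entropies and mutual informations of the marginals of p. -/
open Finset

/-- Shannon entropy of a finitely supported distribution (natural log). -/
noncomputable def Hent {X : Type*} [Fintype X] (p : X → ℝ) : ℝ :=
  ∑ x, Real.negMulLog (p x)

def Unambiguous {A B E : Type*} (p : A → B → E → ℝ) : Prop :=
  (∀ b e, {a | p a b e ≠ 0}.Subsingleton) ∧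
  (∀ a e, {b | p a b e ≠ 0}.Subsingleton) ∧
  (∀ a b, {e | p a b e ≠ 0}.Subsingleton)

lemma negMulLog_sum_of_subsingleton {X : Type*} [Fintype X] (f : X → ℝ)
    (h : {x | f x ≠ 0}.Subsingleton) :
    Real.negMulLog (∑ x, f x) = ∑ x, Real.negMulLog (f x) := by
  by_cases hz : ∀ x, f x = 0
  · simp [hz]
  · push_neg at hz
    obtain ⟨x₀, hx₀⟩ := hz
    have hall : ∀ x ∈ Finset.univ, x ≠ x₀ → f x = 0 := by
      intro x _ hne
      by_contra hfx
      exact hne (h hfx hx₀)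
    rw [Finset.sum_eq_single x₀ hall (by simp),
      Finset.sum_eq_single x₀
        (fun x _ hne => by rw [hall x (Finset.mem_univ x) hne]; simp) (by simp)]

/-- For an unambiguous distribution, the advantage
`I(A;B) − I(A;E)` equals `H(B) − H(E)`. -/
theorem stmt_3 {A B E : Type*} [Fintype A] [Fintype B] [Fintype E]
    (p : A → B → E → ℝ)
    (hp0 : ∀ a b e, 0 ≤ p a b e)
    (hp1 : ∑ a, ∑ b, ∑ e, p a b e = 1)
    (hunamb : Unambiguous p) :
    (((Hent fun a => ∑ b, ∑ e, p a b e) + (Hent fun b => ∑ a, ∑ e, p a b e)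
        - (Hent fun ab : A × B => ∑ e, p ab.1 ab.2 e)) -
     ((Hent fun a => ∑ b, ∑ e, p a b e) + (Hent fun e => ∑ a, ∑ b, p a b e)
        - (Hent fun ae : A × E => ∑ b, p ae.1 b ae.2))) =
    (Hent fun b => ∑ a, ∑ e, p a b e) - (Hent fun e => ∑ a, ∑ b, p a b e) := by
  obtain ⟨h1, h2, h3⟩ := hunamb
  have hab : (Hent fun ab : A × B => ∑ e, p ab.1 ab.2 e)
      = ∑ a, ∑ b, ∑ e, Real.negMulLog (p a b e) := by
    rw [Hent, Fintype.sum_prod_type]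
    refine Finset.sum_congr rfl fun a _ => Finset.sum_congr rfl fun b _ => ?_
    simpa using negMulLog_sum_of_subsingleton (fun e => p a b e) (h3 a b)
  have hae : (Hent fun ae : A × E => ∑ b, p ae.1 b ae.2)
      = ∑ a, ∑ b, ∑ e, Real.negMulLog (p a b e) := by
    rw [Hent, Fintype.sum_prod_type]
    refine Finset.sum_congr rfl fun a _ => ?_
    rw [Finset.sum_comm]
    refine Finset.sum_congr rfl fun e _ => ?_
    simpa using negMulLog_sum_of_subsingleton (fun b => p a b e) (h2 a e)
  rw [hab, hae]
  ring
end

section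
/- Let p be unambiguous and ρ_{AB} = Tr_E|√P_{ABE}⟩⟨√P_{ABE}|. Then ρ_{AB} = Σ_e p(e)·|φ_e⟩⟨φ_e|, where p(e) = Σ_{a,b} p(a,b,e) and |φ_e⟩ = Σ_{a,b} √(p(a,b,e)/p(e)) |a⟩|b⟩ (for p(e) > 0) are mutually orthogonal unit vectors; in particular the nonzero eigenvalues of ρ_{AB} are exactly the nonzero marginal probabilities p(e), and S(ρ_{AB}) = H(E). -/
open Finset

open scoped Classical

noncomputable def rhoAB {A B E : Type*} [Fintype E]
    (p : A → B → E → ℝ) : Matrix (A × B) (A × B) ℝ :=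
  Matrix.of fun x y => ∑ e, Real.sqrt (p x.1 x.2 e * p y.1 y.2 e)

/-- Marginal on `E`. -/
noncomputable def margE {A B E : Type*} [Fintype A] [Fintype B]
    (p : A → B → E → ℝ) : E → ℝ := fun e => ∑ a, ∑ b, p a b e

/-- Normalized eigenvector `φ_e`. -/
noncomputable def phiE {A B E : Type*} [Fintype A] [Fintype B]
    (p : A → B → E → ℝ) (e : E) : A × B → ℝ :=
  fun x => Real.sqrt (p x.1 x.2 e / margE p e)

open Polynomial Matrix

section aux

variable {R : Type*} [CommRing R]

lemma my_charpoly_conj {k : Type*} [Fintype k] [DecidableEq k]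
    (U D V : Matrix k k R) (hUV : U * V = 1) :
    (U * D * V).charpoly = D.charpoly := by
  have hsc : Matrix.scalar k (X : R[X]) = (X : R[X]) • (1 : Matrix k k R[X]) := by
    rw [scalar_apply, smul_one_eq_diagonal]
  have hcm : charmatrix (U * D * V) =
      (U.map C) * charmatrix D * (V.map C) := by
    rw [charmatrix, charmatrix, RingHom.mapMatrix_apply, RingHom.mapMatrix_apply,
      Matrix.mul_sub, Matrix.sub_mul]
    congr 1
    · rw [hsc, mul_smul_comm, mul_one, smul_mul_assoc, ← Matrix.map_mul, hUV,
        Matrix.map_one C (map_zero C) (map_one C)]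
    · rw [← Matrix.map_mul, ← Matrix.map_mul]
  have hdet1 : (U.map C : Matrix k k R[X]).det * (V.map C).det = 1 := by
    rw [← det_mul, ← Matrix.map_mul, hUV, Matrix.map_one C (map_zero C) (map_one C), det_one]
  rw [Matrix.charpoly, Matrix.charpoly, hcm, det_mul, det_mul]
  calc (U.map C).det * (charmatrix D).det * (V.map C).det
      = (U.map C).det * (V.map C).det * (charmatrix D).det := by ring
    _ = (charmatrix D).det := by rw [hdet1, one_mul]

lemma my_charpoly_diagonal {k : Type*} [Fintype k] [DecidableEq k] (d : k → R) :
    (Matrix.diagonal d).charpoly = ∏ i, (X - C (d i)) := by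
  have h : charmatrix (Matrix.diagonal d) = Matrix.diagonal fun i => X - C (d i) := by
    ext i j
    by_cases h : i = j
    · subst h; simp
    · simp [charmatrix_apply, Matrix.diagonal_apply_ne _ h]
  rw [Matrix.charpoly, h, det_diagonal]

lemma my_charpoly_map {k : Type*} [Fintype k] [DecidableEq k]
    {K : Type*} [Field K] (f : ℝ[X] →+* K) (M : Matrix k k ℝ) :
    f M.charpoly = ((f X) • (1 : Matrix k k K) - M.map (f.comp C)).det := by
  rw [Matrix.charpoly, RingHom.map_det, RingHom.mapMatrix_apply]
  congr 1
  ext i j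
  by_cases h : i = j
  · subst h
    simp [charmatrix_apply, Matrix.one_apply, Matrix.map_apply]
  · simp [charmatrix_apply_ne _ _ _ h, Matrix.one_apply_ne h, Matrix.map_apply,
      Matrix.diagonal_apply_ne _ h]

lemma my_det_smul_one_sub {k : Type*} [Fintype k] [DecidableEq k]
    {K : Type*} [Field K] {c : K} (hc0 : c ≠ 0) (P : Matrix k k K) :
    (c • (1 : Matrix k k K) - P).det = c ^ (Fintype.card k) * (1 - c⁻¹ • P).det := by
  have h : c • (1 : Matrix k k K) - P = c • ((1 : Matrix k k K) - c⁻¹ • P) := by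
    rw [smul_sub, smul_smul, mul_inv_cancel₀ hc0, one_smul]
  rw [h, Matrix.det_smul, Fintype.card]

lemma my_charpoly_mul_comm {m n : Type*} [Fintype m] [Fintype n] [DecidableEq m] [DecidableEq n]
    (N : Matrix m n ℝ) :
    X ^ (Fintype.card n) * (N * Nᵀ).charpoly = X ^ (Fintype.card m) * (Nᵀ * N).charpoly := by
  set K := FractionRing ℝ[X]
  set f : ℝ[X] →+* K := algebraMap ℝ[X] K with hf
  have hinj : Function.Injective f := IsFractionRing.injective ℝ[X] K
  set c : K := f X with hc
  have hc0 : c ≠ 0 := fun h => X_ne_zero (R := ℝ) (hinj (h.trans (map_zero f).symm))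
  set g : ℝ →+* K := f.comp C with hg
  apply hinj
  rw [_root_.map_mul, _root_.map_mul, map_pow, map_pow, my_charpoly_map f, my_charpoly_map f,
    Matrix.map_mul (f := g), Matrix.map_mul (f := g), ← hc,
    Matrix.transpose_map, my_det_smul_one_sub hc0, my_det_smul_one_sub hc0]
  have h1 : c⁻¹ • (N.map g * (N.map g)ᵀ) = (c⁻¹ • N.map g) * (N.map g)ᵀ := by
    rw [Matrix.smul_mul]
  have h2 : c⁻¹ • ((N.map g)ᵀ * N.map g) = (N.map g)ᵀ * (c⁻¹ • N.map g) := by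
    rw [Matrix.mul_smul]
  rw [h1, h2, Matrix.det_one_sub_mul_comm]
  ring

end aux

/-- `ρ_AB = Σ_e p(e) |φ_e⟩⟨φ_e|` with the `φ_e` (for `p(e) > 0`) orthonormal;
the nonzero eigenvalues of `ρ_AB` are exactly the nonzero marginals `p(e)`
(as multisets), and `S(ρ_AB) = H(E)`. -/
theorem stmt_15 {A B E : Type*} [Fintype A] [Fintype B] [Fintype E]
    (p : A → B → E → ℝ)
    (hp0 : ∀ a b e, 0 ≤ p a b e)
    (hp1 : ∑ a, ∑ b, ∑ e, p a b e = 1)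
    (hunamb : Unambiguous p)
    (hH : (rhoAB p).IsHermitian) :
    (∀ x y, rhoAB p x y = ∑ e, margE p e * (phiE p e x * phiE p e y)) ∧
    (∀ e e', margE p e ≠ 0 → margE p e' ≠ 0 →
      ∑ x, phiE p e x * phiE p e' x = if e = e' then 1 else 0) ∧
    ((Finset.univ.val.map hH.eigenvalues).filter (· ≠ 0) =
      (Finset.univ.val.map (margE p)).filter (· ≠ 0)) ∧
    (∑ i, Real.negMulLog (hH.eigenvalues i) =
      ∑ e, Real.negMulLog (margE p e)) := by
  classical
  obtain ⟨hA, hB, hE⟩ := hunamb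
  have hm0 : ∀ e, 0 ≤ margE p e := fun e =>
    Finset.sum_nonneg fun a _ => Finset.sum_nonneg fun b _ => hp0 a b e
  have hzero : ∀ e, margE p e = 0 → ∀ a b, p a b e = 0 := by
    intro e hme a b
    have h1 := (Finset.sum_eq_zero_iff_of_nonneg
      (fun a _ => Finset.sum_nonneg fun b _ => hp0 a b e)).mp hme a (mem_univ a)
    exact (Finset.sum_eq_zero_iff_of_nonneg (fun b _ => hp0 a b e)).mp h1 b (mem_univ b)
  have part1 : ∀ x y, rhoAB p x y = ∑ e, margE p e * (phiE p e x * phiE p e y) := by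
    intro x y
    show (∑ e, Real.sqrt (p x.1 x.2 e * p y.1 y.2 e)) = _
    refine Finset.sum_congr rfl fun e _ => ?_
    by_cases hm : margE p e = 0
    · rw [hm, hzero e hm x.1 x.2, zero_mul, zero_mul, Real.sqrt_zero]
    · unfold phiE
      rw [← Real.sqrt_mul (div_nonneg (hp0 _ _ _) (hm0 e))]
      have hrw : p x.1 x.2 e / margE p e * (p y.1 y.2 e / margE p e)
          = (p x.1 x.2 e * p y.1 y.2 e) / (margE p e ^ 2) := by ring
      rw [hrw, Real.sqrt_div (mul_nonneg (hp0 _ _ _) (hp0 _ _ _)), Real.sqrt_sq (hm0 e)]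
      field_simp
  have part2 : ∀ e e', margE p e ≠ 0 → margE p e' ≠ 0 →
      ∑ x, phiE p e x * phiE p e' x = if e = e' then 1 else 0 := by
    intro e e' he he'
    by_cases h : e = e'
    · subst h
      rw [if_pos rfl]
      unfold phiE
      have hsq : ∀ x : A × B, Real.sqrt (p x.1 x.2 e / margE p e)
          * Real.sqrt (p x.1 x.2 e / margE p e) = p x.1 x.2 e / margE p e :=
        fun x => Real.mul_self_sqrt (div_nonneg (hp0 _ _ _) (hm0 e))
      rw [Finset.sum_congr rfl fun x _ => hsq x, ← Finset.sum_div, Fintype.sum_prod_type]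
      exact div_self he
    · rw [if_neg h]
      refine Finset.sum_eq_zero fun x _ => ?_
      by_cases hx : p x.1 x.2 e = 0
      · unfold phiE
        rw [hx, zero_div, Real.sqrt_zero, zero_mul]
      · have hx' : p x.1 x.2 e' = 0 := by
          by_contra hx'
          exact h (hE x.1 x.2 hx hx')
        unfold phiE
        rw [hx', zero_div, Real.sqrt_zero, mul_zero]
  -- the rectangular square-root matrix
  set N : Matrix E (A × B) ℝ := Matrix.of fun e x => Real.sqrt (p x.1 x.2 e) with hN
  have hNNT : N * Nᵀ = Matrix.diagonal (margE p) := by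
    ext e e'
    rw [Matrix.mul_apply]
    by_cases h : e = e'
    · subst h
      rw [Matrix.diagonal_apply_eq]
      have hsq : ∀ x : A × B, N e x * Nᵀ x e = p x.1 x.2 e :=
        fun x => Real.mul_self_sqrt (hp0 _ _ _)
      rw [Finset.sum_congr rfl fun x _ => hsq x, Fintype.sum_prod_type]
      rfl
    · rw [Matrix.diagonal_apply_ne _ h]
      refine Finset.sum_eq_zero fun x _ => ?_
      show Real.sqrt (p x.1 x.2 e) * Real.sqrt (p x.1 x.2 e') = 0
      by_cases hx : p x.1 x.2 e = 0
      · rw [hx, Real.sqrt_zero, zero_mul]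
      · have hx' : p x.1 x.2 e' = 0 := by
          by_contra hx'
          exact h (hE x.1 x.2 hx hx')
        rw [hx', Real.sqrt_zero, mul_zero]
  have hNTN : Nᵀ * N = rhoAB p := by
    ext x y
    rw [Matrix.mul_apply]
    show (∑ e, Nᵀ x e * N e y) = ∑ e, Real.sqrt (p x.1 x.2 e * p y.1 y.2 e)
    exact Finset.sum_congr rfl fun e _ => (Real.sqrt_mul (hp0 _ _ _) _).symm
  -- charpoly of rhoAB via the spectral theorem
  have hofReal : (RCLike.ofReal ∘ hH.eigenvalues : A × B → ℝ) = hH.eigenvalues := by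
    funext i
    simp [RCLike.ofReal]
  have hcp_rho : (rhoAB p).charpoly
      = ∏ i, (Polynomial.X - Polynomial.C (hH.eigenvalues i)) := by
    calc (rhoAB p).charpoly
        = ((hH.eigenvectorUnitary : Matrix (A × B) (A × B) ℝ)
            * Matrix.diagonal (RCLike.ofReal ∘ hH.eigenvalues)
            * (star (hH.eigenvectorUnitary : Matrix (A × B) (A × B) ℝ))).charpoly := by
          conv_lhs => rw [hH.spectral_theorem, Unitary.conjStarAlgAut_apply]
      _ = (Matrix.diagonal (RCLike.ofReal ∘ hH.eigenvalues)).charpoly :=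
          my_charpoly_conj _ _ _
            ((Matrix.mem_unitaryGroup_iff).mp (hH.eigenvectorUnitary).2)
      _ = ∏ i, (Polynomial.X - Polynomial.C (hH.eigenvalues i)) := by
          rw [hofReal, my_charpoly_diagonal]
  -- the polynomial identity
  have hpoly := my_charpoly_mul_comm N
  rw [hNNT, hNTN, hcp_rho, my_charpoly_diagonal] at hpoly
  -- take roots
  have hmonic1 : (∏ e, (Polynomial.X - Polynomial.C (margE p e))).Monic :=
    Polynomial.monic_prod_of_monic _ _ fun e _ => Polynomial.monic_X_sub_C _
  have hmonic2 : (∏ i, (Polynomial.X - Polynomial.C (hH.eigenvalues i))).Monic :=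
    Polynomial.monic_prod_of_monic _ _ fun i _ => Polynomial.monic_X_sub_C _
  have hne1 : (Polynomial.X : Polynomial ℝ) ^ (Fintype.card (A × B))
      * ∏ e, (Polynomial.X - Polynomial.C (margE p e)) ≠ 0 :=
    ((Polynomial.monic_X_pow _).mul hmonic1).ne_zero
  have hne2 : (Polynomial.X : Polynomial ℝ) ^ (Fintype.card E)
      * ∏ i, (Polynomial.X - Polynomial.C (hH.eigenvalues i)) ≠ 0 :=
    ((Polynomial.monic_X_pow _).mul hmonic2).ne_zero
  have hr1 : (∏ e, (Polynomial.X - Polynomial.C (margE p e))).roots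
      = Finset.univ.val.map (margE p) := by
    have hco : (fun e => Polynomial.X - Polynomial.C (margE p e))
        = (fun r => Polynomial.X - Polynomial.C r) ∘ (margE p) := rfl
    rw [Finset.prod_eq_multiset_prod, hco, ← Multiset.map_map,
      Polynomial.roots_multiset_prod_X_sub_C]
  have hr2 : (∏ i, (Polynomial.X - Polynomial.C (hH.eigenvalues i))).roots
      = Finset.univ.val.map hH.eigenvalues := by
    have hco : (fun i => Polynomial.X - Polynomial.C (hH.eigenvalues i))
        = (fun r => Polynomial.X - Polynomial.C r) ∘ hH.eigenvalues := rfl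
    rw [Finset.prod_eq_multiset_prod, hco, ← Multiset.map_map,
      Polynomial.roots_multiset_prod_X_sub_C]
  have hroots := congrArg Polynomial.roots hpoly
  rw [Polynomial.roots_mul hne1, Polynomial.roots_mul hne2, Polynomial.roots_pow,
    Polynomial.roots_pow, Polynomial.roots_X, hr1, hr2, Multiset.nsmul_singleton,
    Multiset.nsmul_singleton] at hroots
  -- filter out the zeros
  have hfilt : ∀ k : ℕ, (Multiset.replicate k (0 : ℝ)).filter (· ≠ 0) = 0 := by
    intro k
    rw [Multiset.filter_eq_nil]
    intro a ha
    obtain rfl := Multiset.eq_of_mem_replicate ha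
    simp
  have part3 : (Finset.univ.val.map hH.eigenvalues).filter (· ≠ 0) =
      (Finset.univ.val.map (margE p)).filter (· ≠ 0) := by
    have h := congrArg (Multiset.filter (· ≠ 0)) hroots
    rw [Multiset.filter_add, Multiset.filter_add, hfilt, hfilt, zero_add, zero_add] at h
    exact h.symm
  refine ⟨part1, part2, part3, ?_⟩
  -- entropy equality
  have hsum : ∀ s : Multiset ℝ,
      (s.map Real.negMulLog).sum = ((s.filter (· ≠ 0)).map Real.negMulLog).sum := by
    intro s
    have h0 : ((s.filter (fun a => ¬ a ≠ 0)).map Real.negMulLog).sum = 0 := by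
      apply Multiset.sum_eq_zero
      intro x hx
      obtain ⟨a, ha, rfl⟩ := Multiset.mem_map.mp hx
      have ha0 : a = 0 := by
        have := Multiset.of_mem_filter ha
        push_neg at this
        exact this
      rw [ha0, Real.negMulLog_zero]
    conv_lhs => rw [← Multiset.filter_add_not (· ≠ 0) s]
    rw [Multiset.map_add, Multiset.sum_add, h0, add_zero]
  have hfs1 : ∑ i, Real.negMulLog (hH.eigenvalues i)
      = ((Finset.univ.val.map hH.eigenvalues).map Real.negMulLog).sum := by
    rw [Multiset.map_map]
    exact Finset.sum_eq_multiset_sum _ _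
  have hfs2 : ∑ e, Real.negMulLog (margE p e)
      = ((Finset.univ.val.map (margE p)).map Real.negMulLog).sum := by
    rw [Multiset.map_map]
    exact Finset.sum_eq_multiset_sum _ _
  rw [hfs1, hfs2, hsum, part3, ← hsum]
end
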